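/- A set X of at most 2n+1 distinct points in ℂ² is n-dependent if and only if some n+2 of its points are collinear. -/
import Mathlib


open MvPolynomial

abbrev Poly2 := MvPolynomial (Fin 2) ℂ
abbrev Pt := Fin 2 → ℂ

/-- `p` is an `n`-fundamental polynomial of the point `A` with respect to the set `S`. -/
def IsFund (n : ℕ) (S : Finset Pt) (A : Pt) (p : Poly2) : Prop :=
  p.totalDegree ≤ n ∧ (∀ x ∈ S, x ≠ A → eval x p = 0) ∧ eval A p ≠ 0

/-- A finite point set is `n`-independent if each of its points has an
`n`-fundamental polynomial. -/
def NIndep (n : ℕ) (S : Finset Pt) : Prop := ∀ A ∈ S, ∃ p : Poly2, IsFund n S A p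

/-- A finite point set is essentially `k`-dependent if no point has a
`k`-fundamental polynomial. -/
def EssDep (k : ℕ) (S : Finset Pt) : Prop :=
  ∀ A ∈ S, ∀ p : Poly2, p.totalDegree ≤ k →
    (∀ x ∈ S, x ≠ A → eval x p = 0) → eval A p = 0

attribute [local instance] Classical.propDecidable


noncomputable def restr (a v : Pt) (p : Poly2) : Polynomial ℂ :=
  MvPolynomial.eval₂ Polynomial.C (fun i => Polynomial.C (a i) + Polynomial.X * Polynomial.C (v i)) p

lemma restr_eval (a v : Pt) (p : Poly2) (t : ℂ) :
    (restr a v p).eval t = eval (fun i => a i + t * v i) p := by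
  unfold restr
  have h := MvPolynomial.eval₂_comp_left (Polynomial.evalRingHom t)
    (Polynomial.C : ℂ →+* Polynomial ℂ)
    (fun i => Polynomial.C (a i) + Polynomial.X * Polynomial.C (v i)) p
  simp only [Polynomial.coe_evalRingHom] at h
  rw [h]
  have h2 : (Polynomial.evalRingHom t).comp (Polynomial.C : ℂ →+* Polynomial ℂ) = RingHom.id ℂ := by
    ext x; simp
  have h3 : (Polynomial.eval t ∘ fun i => Polynomial.C (a i) + Polynomial.X * Polynomial.C (v i))
      = fun i => a i + t * v i := by
    funext i; simp only [Function.comp_apply, Polynomial.eval_add, Polynomial.eval_C, Polynomial.eval_mul, Polynomial.eval_X, mul_comm]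
  rw [h2, h3, MvPolynomial.eval₂_id]

lemma restr_natDegree_le (a v : Pt) (p : Poly2) : (restr a v p).natDegree ≤ p.totalDegree := by
  unfold restr
  rw [MvPolynomial.eval₂_eq]
  apply Polynomial.natDegree_sum_le_of_forall_le
  intro d hd
  refine le_trans (Polynomial.natDegree_C_mul_le _ _) ?_
  refine le_trans (Polynomial.natDegree_prod_le _ _) ?_
  refine le_trans (Finset.sum_le_sum (fun i _ => ?_)) (MvPolynomial.le_totalDegree hd)
  refine le_trans (Polynomial.natDegree_pow_le) ?_
  have h1 : (Polynomial.C (a i) + Polynomial.X * Polynomial.C (v i)).natDegree ≤ 1 := by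
    refine le_trans (Polynomial.natDegree_add_le _ _) ?_
    simp only [Polynomial.natDegree_C, max_le_iff]
    refine ⟨by omega, le_trans (Polynomial.natDegree_mul_le) (by simp)⟩
  calc d i * (Polynomial.C (a i) + Polynomial.X * Polynomial.C (v i)).natDegree
      ≤ d i * 1 := Nat.mul_le_mul_left _ h1
    _ = d i := by ring


lemma pt_ext {x y : Pt} (h0 : x 0 = y 0) (h1 : x 1 = y 1) : x = y := by
  funext i; fin_cases i; exacts [h0, h1]

lemma pt_apply0 (x y : Pt) (t : ℂ) : (x + t • (y - x)) 0 = x 0 + t * (y 0 - x 0) := rfl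
lemma pt_apply1 (x y : Pt) (t : ℂ) : (x + t • (y - x)) 1 = x 1 + t * (y 1 - x 1) := rfl

lemma lin_sep {A B : Pt} (h : A ≠ B) :
    ∃ ℓ : Poly2, ℓ.totalDegree ≤ 1 ∧ eval B ℓ = 0 ∧ eval A ℓ ≠ 0 := by
  have : ∃ i, A i ≠ B i := by
    by_contra hc; push_neg at hc; exact h (funext hc)
  obtain ⟨i, hi⟩ := this
  refine ⟨X i - C (B i), ?_, by simp, by simpa [sub_eq_zero] using hi⟩
  refine le_trans (MvPolynomial.totalDegree_sub _ _) ?_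
  simp [MvPolynomial.totalDegree_X]

noncomputable def detp (B C : Pt) : Poly2 :=
  (X 0 - MvPolynomial.C (B 0)) * MvPolynomial.C (C 1 - B 1)
    - (X 1 - MvPolynomial.C (B 1)) * MvPolynomial.C (C 0 - B 0)

lemma detp_eval (B C x : Pt) :
    eval x (detp B C) = (x 0 - B 0) * (C 1 - B 1) - (x 1 - B 1) * (C 0 - B 0) := by
  simp [detp]

lemma tdlin (i : Fin 2) (b : ℂ) : (X i - MvPolynomial.C b : Poly2).totalDegree ≤ 1 := by
  refine le_trans (MvPolynomial.totalDegree_sub _ _) ?_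
  simp [MvPolynomial.totalDegree_X]

lemma detp_totalDegree (B C : Pt) : (detp B C).totalDegree ≤ 1 := by
  unfold detp
  refine le_trans (MvPolynomial.totalDegree_sub _ _) (max_le ?_ ?_) <;>
  · refine le_trans (MvPolynomial.totalDegree_mul _ _) ?_
    simp only [MvPolynomial.totalDegree_C]
    have := tdlin (0 : Fin 2) (B 0)
    have := tdlin (1 : Fin 2) (B 1)
    omega

lemma detp_eval_self (B C : Pt) : eval B (detp B C) = 0 := by simp [detp_eval]

lemma detp_eval_other (B C : Pt) : eval C (detp B C) = 0 := by rw [detp_eval]; ring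

lemma par2 {a0 a1 c0 c1 : ℂ} (h : a0 * c1 - a1 * c0 = 0) (ha : ¬(a0 = 0 ∧ a1 = 0)) :
    ∃ s : ℂ, c0 = s * a0 ∧ c1 = s * a1 := by
  by_cases h0 : a0 = 0
  · have h1 : a1 ≠ 0 := fun h1 => ha ⟨h0, h1⟩
    have hc0 : c0 = 0 := by
      have h2 : a1 * c0 = 0 := by linear_combination c1 * h0 - h
      rcases mul_eq_zero.mp h2 with h' | h'
      · exact absurd h' h1
      · exact h'
    exact ⟨c1 / a1, by rw [h0, hc0]; ring, by field_simp⟩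
  · refine ⟨c0 / a0, by field_simp, ?_⟩
    rw [div_mul_eq_mul_div, eq_div_iff h0]
    linear_combination h

lemma detp_eval_ne {A B C : Pt} (hAB : A ≠ B) (hC : ¬ ∃ t : ℂ, C = A + t • (B - A)) :
    eval A (detp B C) ≠ 0 := by
  intro hdet
  rw [detp_eval] at hdet
  have ha : ¬((A 0 - B 0) = 0 ∧ (A 1 - B 1) = 0) := by
    rintro ⟨h0, h1⟩
    exact hAB (pt_ext (by linear_combination h0) (by linear_combination h1))
  obtain ⟨s, hs0, hs1⟩ := par2 (a0 := A 0 - B 0) (a1 := A 1 - B 1)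
      (c0 := C 0 - B 0) (c1 := C 1 - B 1) (by linear_combination hdet) ha
  apply hC
  refine ⟨1 - s, pt_ext ?_ ?_⟩
  · rw [pt_apply0]; linear_combination hs0
  · rw [pt_apply1]; linear_combination hs1

lemma prod_small (k : ℕ) (S : Finset Pt) (A : Pt) (hA : A ∉ S) (hcard : S.card ≤ k) :
    ∃ p : Poly2, p.totalDegree ≤ k ∧ (∀ x ∈ S, eval x p = 0) ∧ eval A p ≠ 0 := by
  have hne : ∀ B ∈ S, A ≠ B := fun B hB h => hA (h ▸ hB)
  set f : Pt → Poly2 := fun B =>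
    if h : A = B then 1 else Classical.choose (lin_sep h) with hf
  have hfd : ∀ B ∈ S, (f B).totalDegree ≤ 1 := by
    intro B hB
    simp only [hf, dif_neg (hne B hB)]
    exact (Classical.choose_spec (lin_sep (hne B hB))).1
  have hfz : ∀ B ∈ S, eval B (f B) = 0 := by
    intro B hB
    simp only [hf, dif_neg (hne B hB)]
    exact (Classical.choose_spec (lin_sep (hne B hB))).2.1
  have hfnz : ∀ B ∈ S, eval A (f B) ≠ 0 := by
    intro B hB
    simp only [hf, dif_neg (hne B hB)]
    exact (Classical.choose_spec (lin_sep (hne B hB))).2.2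
  refine ⟨∏ B ∈ S, f B, ?_, ?_, ?_⟩
  · refine le_trans (MvPolynomial.totalDegree_finset_prod _ _) ?_
    calc ∑ B ∈ S, (f B).totalDegree ≤ ∑ B ∈ S, 1 := Finset.sum_le_sum hfd
      _ = S.card := by simp
      _ ≤ k := hcard
  · intro x hx
    rw [map_prod]
    exact Finset.prod_eq_zero hx (hfz x hx)
  · rw [map_prod]
    exact Finset.prod_ne_zero_iff.mpr (fun B hB => hfnz B hB)


lemma cover (k : ℕ) : ∀ (S : Finset Pt) (A : Pt), A ∉ S → S.card ≤ 2 * k →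
    (∀ (v : Pt) (T : Finset Pt), T ⊆ S → (∀ x ∈ T, ∃ t : ℂ, x = A + t • v) → T.card ≤ k) →
    ∃ p : Poly2, p.totalDegree ≤ k ∧ (∀ x ∈ S, eval x p = 0) ∧ eval A p ≠ 0 := by
  induction k with
  | zero =>
    intro S A hA hcard _
    have hS : S = ∅ := Finset.card_eq_zero.mp (by omega)
    exact ⟨1, by simp, by simp [hS], by simp⟩
  | succ k ih =>
    intro S A hA hcard hcap
    by_cases hsmall : S.card ≤ k + 1
    · exact prod_small _ _ _ hA hsmall
    push_neg at hsmall
    -- groups: points of S on the line through A and B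
    set M : Pt → Finset Pt := fun B => S.filter (fun x => ∃ t : ℂ, x = A + t • (B - A)) with hM
    have hMsub : ∀ B, M B ⊆ S := fun B => Finset.filter_subset _ _
    have hself : ∀ B ∈ S, B ∈ M B := by
      intro B hB
      simp only [hM, Finset.mem_filter]
      exact ⟨hB, 1, by rw [one_smul, add_comm, sub_add_cancel]⟩
    have hMcard : ∀ B, (M B).card ≤ k + 1 :=
      fun B => hcap (B - A) (M B) (hMsub B) (fun x hx => (Finset.mem_filter.mp hx).2)
    have hMeq : ∀ B ∈ S, ∀ x ∈ M B, M x = M B := by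
      intro B hB x hx
      obtain ⟨hxS, t, hxt⟩ := Finset.mem_filter.mp hx
      have hxA : x ≠ A := fun h => hA (h ▸ hxS)
      have ht : t ≠ 0 := by
        intro h; apply hxA; rw [hxt, h, zero_smul, add_zero]
      have hxA' : x - A = t • (B - A) := by rw [hxt, add_comm, add_sub_cancel_right]
      ext y
      simp only [hM, Finset.mem_filter, and_congr_right_iff]
      intro hyS
      constructor
      · rintro ⟨s, rfl⟩
        exact ⟨s * t, by rw [hxA', smul_smul]⟩
      · rintro ⟨u, rfl⟩
        refine ⟨u / t, ?_⟩
        rw [hxA', smul_smul, div_mul_cancel₀ _ ht]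
    have hMdisj : ∀ u ∈ S, ∀ w ∈ S, M u ≠ M w → Disjoint (M u) (M w) := by
      intro u hu w hw hne
      by_contra hd
      obtain ⟨y, hyu, hyw⟩ := Finset.not_disjoint_iff.mp hd
      exact hne ((hMeq u hu y hyu).symm.trans (hMeq w hw y hyw))
    -- choose B and C
    obtain ⟨B, hB, C, hC, hCMB, hstar⟩ :
        ∃ B ∈ S, ∃ C ∈ S, C ∉ M B ∧
          ∀ x0 ∈ S, (M x0).card = k + 1 → B ∈ M x0 ∨ C ∈ M x0 := by
      have hnotsub : ∀ B, ¬ S ⊆ M B := by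
        intro B hsub
        have := Finset.card_le_card hsub
        have := hMcard B
        omega
      by_cases hheavy : ∃ B ∈ S, (M B).card = k + 1
      · obtain ⟨B, hB, hMB⟩ := hheavy
        by_cases hh2 : ∃ C ∈ S, C ∉ M B ∧ (M C).card = k + 1
        · obtain ⟨C, hC, hCMB, hMC⟩ := hh2
          refine ⟨B, hB, C, hC, hCMB, ?_⟩
          intro x0 hx0 hMx0
          by_contra hcon
          push_neg at hcon
          obtain ⟨hBn, hCn⟩ := hcon
          have hd1 : Disjoint (M B) (M x0) := by
            refine hMdisj B hB x0 hx0 (fun h => hBn (h ▸ hself B hB))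
          have hd2 : Disjoint (M C) (M x0) := by
            refine hMdisj C hC x0 hx0 (fun h => hCn (h ▸ hself C hC))
          have hd3 : Disjoint (M B) (M C) := by
            refine hMdisj B hB C hC (fun h => hCMB (h ▸ hself C hC))
          have hdu : Disjoint (M B ∪ M C) (M x0) := Finset.disjoint_union_left.mpr ⟨hd1, hd2⟩
          have hcard1 : (M B ∪ M C ∪ M x0).card = 3 * (k + 1) := by
            rw [Finset.card_union_of_disjoint hdu, Finset.card_union_of_disjoint hd3,
              hMB, hMC, hMx0]
            ring
          have hsubS : M B ∪ M C ∪ M x0 ⊆ S := by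
            intro y hy
            rcases Finset.mem_union.mp hy with hy | hy
            · rcases Finset.mem_union.mp hy with hy | hy
              · exact hMsub B hy
              · exact hMsub C hy
            · exact hMsub x0 hy
          have := Finset.card_le_card hsubS
          omega
        · obtain ⟨C, hC, hCMB⟩ := Finset.not_subset.mp (hnotsub B)
          refine ⟨B, hB, C, hC, hCMB, ?_⟩
          intro x0 hx0 hMx0
          left
          by_contra hBn
          have hx0MB : x0 ∉ M B := by
            intro h
            exact hBn ((hMeq B hB x0 h) ▸ hself B hB)
          exact hh2 ⟨x0, hx0, hx0MB, hMx0⟩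
      · obtain ⟨B, hB⟩ := Finset.card_pos.mp (show 0 < S.card by omega)
        obtain ⟨C, hC, hCMB⟩ := Finset.not_subset.mp (hnotsub B)
        push_neg at hheavy
        exact ⟨B, hB, C, hC, hCMB, fun x0 hx0 hMx0 => absurd hMx0 (hheavy x0 hx0)⟩
    have hAB : A ≠ B := fun h => hA (h ▸ hB)
    have hCexists : ¬ ∃ t : ℂ, C = A + t • (B - A) := by
      intro h
      exact hCMB (Finset.mem_filter.mpr ⟨hC, h⟩)
    have hlA : eval A (detp B C) ≠ 0 := detp_eval_ne hAB hCexists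
    have hCB : C ≠ B := fun h => hCMB (h ▸ hself B hB)
    set S2 : Finset Pt := S.filter (fun x => eval x (detp B C) ≠ 0) with hS2
    have hS2sub : S2 ⊆ S := Finset.filter_subset _ _
    have hBS2 : B ∉ S2 := by
      simp only [hS2, Finset.mem_filter, not_and, not_not]
      intro _; exact detp_eval_self B C
    have hCS2 : C ∉ S2 := by
      simp only [hS2, Finset.mem_filter, not_and, not_not]
      intro _; exact detp_eval_other B C
    have hS2card : S2.card ≤ 2 * k := by
      have hsub : S2 ⊆ (S.erase B).erase C := by
        intro x hx
        exact Finset.mem_erase.mpr ⟨fun h => hCS2 (h ▸ hx),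
          Finset.mem_erase.mpr ⟨fun h => hBS2 (h ▸ hx), hS2sub hx⟩⟩
      have h1 := Finset.card_le_card hsub
      have h2 : ((S.erase B).erase C).card = S.card - 2 := by
        rw [Finset.card_erase_of_mem (Finset.mem_erase.mpr ⟨hCB, hC⟩),
          Finset.card_erase_of_mem hB]
        omega
      omega
    have hAS2 : A ∉ S2 := fun h => hA (hS2sub h)
    have hcap2 : ∀ (v : Pt) (T : Finset Pt), T ⊆ S2 →
        (∀ x ∈ T, ∃ t : ℂ, x = A + t • v) → T.card ≤ k := by
      intro v T hTsub hTline
      by_contra hgt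
      push_neg at hgt
      obtain ⟨T', hT'sub, hT'card⟩ := Finset.exists_subset_card_eq (show k + 1 ≤ T.card by omega)
      obtain ⟨x0, hx0T⟩ := Finset.card_pos.mp (show 0 < T'.card by omega)
      have hx0S2 : x0 ∈ S2 := hTsub (hT'sub hx0T)
      have hx0S : x0 ∈ S := hS2sub hx0S2
      obtain ⟨t0, ht0⟩ := hTline x0 (hT'sub hx0T)
      have ht0ne : t0 • v ≠ 0 := by
        intro h
        apply hA
        have : x0 = A := by rw [ht0, h, add_zero]
        exact this ▸ hx0S
      have ht0' : t0 ≠ 0 := fun h => ht0ne (by rw [h, zero_smul])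
      have hx0A : x0 - A = t0 • v := by rw [ht0, add_comm, add_sub_cancel_right]
      have hT'M : T' ⊆ M x0 := by
        intro x hx
        obtain ⟨t, ht⟩ := hTline x (hT'sub hx)
        refine Finset.mem_filter.mpr ⟨hS2sub (hTsub (hT'sub hx)), t / t0, ?_⟩
        rw [hx0A, smul_smul, div_mul_cancel₀ _ ht0', ht]
      have hMx0card : (M x0).card = k + 1 := by
        have h1 := hMcard x0
        have h2 := Finset.card_le_card hT'M
        omega
      have hT'eq : T' = M x0 := Finset.eq_of_subset_of_card_le hT'M (by omega)
      rcases hstar x0 hx0S hMx0card with h | h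
      · exact hBS2 (hTsub (hT'sub (hT'eq ▸ h)))
      · exact hCS2 (hTsub (hT'sub (hT'eq ▸ h)))
    obtain ⟨p', hd', hz', hnz'⟩ := ih S2 A hAS2 hS2card hcap2
    refine ⟨detp B C * p', ?_, ?_, ?_⟩
    · refine le_trans (MvPolynomial.totalDegree_mul _ _) ?_
      have := detp_totalDegree B C
      omega
    · intro x hx
      rw [map_mul]
      by_cases h : eval x (detp B C) = 0
      · rw [h, zero_mul]
      · rw [hz' x (Finset.mem_filter.mpr ⟨hx, h⟩), mul_zero]
    · rw [map_mul]
      exact mul_ne_zero hlA hnz'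

theorem stmt2 (n : ℕ) (X : Finset Pt) (hcard : X.card ≤ 2 * n + 1) :
    ¬ NIndep n X ↔ ∃ Y ⊆ X, Y.card = n + 2 ∧ Collinear ℂ (Y : Set Pt) := by
  constructor
  · intro hdep
    by_contra hno
    push_neg at hno
    apply hdep
    intro A hA
    have hAe : A ∉ X.erase A := fun h => (Finset.mem_erase.mp h).1 rfl
    have hecard : (X.erase A).card ≤ 2 * n := by
      rw [Finset.card_erase_of_mem hA]
      have : 0 < X.card := Finset.card_pos.mpr ⟨A, hA⟩
      omega
    have hcap : ∀ (v : Pt) (T : Finset Pt), T ⊆ X.erase A →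
        (∀ x ∈ T, ∃ t : ℂ, x = A + t • v) → T.card ≤ n := by
      intro v T hTsub hTline
      by_contra hgt
      push_neg at hgt
      have hAT : A ∉ T := fun h => (Finset.mem_erase.mp (hTsub h)).1 rfl
      have hIcard : n + 2 ≤ (insert A T).card := by
        rw [Finset.card_insert_of_notMem hAT]; omega
      obtain ⟨Y, hYsub, hYcard⟩ := Finset.exists_subset_card_eq hIcard
      have hYX : Y ⊆ X := by
        refine hYsub.trans ?_
        intro y hy
        rcases Finset.mem_insert.mp hy with rfl | hy
        · exact hA
        · exact Finset.mem_of_mem_erase (hTsub hy)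
      have hcol : Collinear ℂ ((insert A T : Finset Pt) : Set Pt) := by
        rw [collinear_iff_exists_forall_eq_smul_vadd]
        refine ⟨A, v, ?_⟩
        intro p hp
        simp only [Finset.coe_insert, Set.mem_insert_iff, Finset.mem_coe] at hp
        rcases hp with rfl | hp
        · exact ⟨0, by simp⟩
        · obtain ⟨t, ht⟩ := hTline p hp
          exact ⟨t, by rw [ht]; simp [vadd_eq_add, add_comm]⟩
      have hYcol : Collinear ℂ (Y : Set Pt) :=
        hcol.subset (Finset.coe_subset.mpr hYsub)
      exact hno Y hYX hYcard hYcol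
    obtain ⟨p, hd, hz, hnz⟩ := cover n (X.erase A) A hAe hecard hcap
    exact ⟨p, hd, fun x hx hxA => hz x (Finset.mem_erase.mpr ⟨hxA, hx⟩), hnz⟩
  · rintro ⟨Y, hYX, hYcard, hYcol⟩ hNI
    have hYne : Y.Nonempty := Finset.card_pos.mp (by omega)
    obtain ⟨A, hAY⟩ := hYne
    obtain ⟨p, hdeg, hvan, hnz⟩ := hNI A (hYX hAY)
    rw [collinear_iff_exists_forall_eq_smul_vadd] at hYcol
    obtain ⟨p₀, v, hline⟩ := hYcol
    have hline' : ∀ y ∈ Y, ∃ r : ℂ, y = (fun i => p₀ i + r * v i : Pt) := by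
      intro y hy
      obtain ⟨r, hr⟩ := hline y (Finset.mem_coe.mpr hy)
      refine ⟨r, ?_⟩
      rw [hr]
      funext i
      simp [vadd_eq_add, add_comm, mul_comm]
    set tmap : Pt → ℂ := fun y =>
      if h : ∃ r : ℂ, y = (fun i => p₀ i + r * v i : Pt) then h.choose else 0 with htmap
    have hty : ∀ y ∈ Y, y = (fun i => p₀ i + tmap y * v i : Pt) := by
      intro y hy
      have h := hline' y hy
      simp only [htmap, dif_pos h]
      exact h.choose_spec
    have hvne : v ≠ 0 := by
      intro hv
      have hone : ∀ y ∈ Y, y = p₀ := by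
        intro y hy
        rw [hty y hy, hv]
        funext i
        simp
      have : Y.card ≤ 1 := Finset.card_le_one.mpr
        (fun a ha b hb => (hone a ha).trans (hone b hb).symm)
      omega
    have hinj : Set.InjOn tmap (Y.erase A : Set Pt) := by
      intro y hy z hz h
      have hyY := Finset.mem_of_mem_erase (Finset.mem_coe.mp hy)
      have hzY := Finset.mem_of_mem_erase (Finset.mem_coe.mp hz)
      rw [hty y hyY, hty z hzY, h]
    set ts : Finset ℂ := (Y.erase A).image tmap with hts
    have htscard : ts.card = n + 1 := by
      rw [hts, Finset.card_image_of_injOn hinj, Finset.card_erase_of_mem hAY, hYcard]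
      omega
    set q : Polynomial ℂ := restr p₀ v p with hq
    have hq0 : ∀ t ∈ ts, q.eval t = 0 := by
      intro t ht
      obtain ⟨y, hy, rfl⟩ := Finset.mem_image.mp ht
      rw [hq, restr_eval, ← hty y (Finset.mem_of_mem_erase hy)]
      exact hvan y (hYX (Finset.mem_of_mem_erase hy)) (Finset.mem_erase.mp hy).1
    have hqz : q = 0 := by
      refine Polynomial.eq_zero_of_natDegree_lt_card_of_eval_eq_zero' q ts hq0 ?_
      have h2 : q.natDegree ≤ p.totalDegree := restr_natDegree_le p₀ v p
      omega
    have : q.eval (tmap A) = eval A p := by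
      rw [hq, restr_eval, ← hty A hAY]
    rw [hqz] at this
    simp at this
    exact hnz this.symm
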